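/- Let M be a positive natural number, let r ∈ ℝ^M with r ≠ 0, let μ₂ > 0, μ₃ > 0 and s ∈ ℝ, and set E = ‖r‖₂², p = (μ₂ − 2μ₃ s)/(2 μ₃ E), q = −μ₂/(2 μ₃ E). Then a vector e ∈ ℝ^M satisfies the equation (1 + (2μ₃/μ₂)·(‖e‖₂² − s))·e = r if and only if there exists γ ∈ ℝ with γ³ + p·γ + q = 0 and e = γ·r. -/

import Mathlib

/-- With `r ≠ 0`, `E = ‖r‖₂²`, `p = (μ₂ − 2μ₃ s)/(2μ₃E)` and
`q = −μ₂/(2μ₃E)`, a vector `e` satisfies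
`(1 + (2μ₃/μ₂)(‖e‖₂² − s))·e = r` iff `e = γ·r` for some real root `γ` of the
depressed cubic `γ³ + p·γ + q = 0`. -/
theorem noise_update_stationarity_iff_cubic
    (M : ℕ) (hM : 0 < M) (r : Fin M → ℝ) (hr : r ≠ 0)
    (μ₂ μ₃ : ℝ) (hμ₂ : 0 < μ₂) (hμ₃ : 0 < μ₃) (s : ℝ) :
    let E : ℝ := ∑ i, (r i) ^ 2
    let p : ℝ := (μ₂ - 2 * μ₃ * s) / (2 * μ₃ * E)
    let q : ℝ := -μ₂ / (2 * μ₃ * E)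
    ∀ e : Fin M → ℝ,
      (1 + (2 * μ₃ / μ₂) * ((∑ i, (e i) ^ 2) - s)) • e = r ↔
      ∃ γ : ℝ, γ ^ 3 + p * γ + q = 0 ∧ e = γ • r := by
  intro E p q e
  have hEdef : E = ∑ i, (r i) ^ 2 := rfl
  have hp : p = (μ₂ - 2 * μ₃ * s) / (2 * μ₃ * E) := rfl
  have hq : q = -μ₂ / (2 * μ₃ * E) := rfl
  have hE : 0 < E := by
    obtain ⟨i, hi⟩ : ∃ i, r i ≠ 0 := by
      by_contra h; push_neg at h; exact hr (funext h)
    exact Finset.sum_pos' (fun j _ => sq_nonneg _)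
      ⟨i, Finset.mem_univ i, by positivity⟩
  clear_value E p q
  constructor
  · intro h
    set S := ∑ i, e i ^ 2 with hS
    set c := 1 + 2 * μ₃ / μ₂ * (S - s) with hc
    clear_value S c
    have hc0 : c ≠ 0 := by
      intro h0
      apply hr
      rw [← h, h0, zero_smul]
    have he : e = c⁻¹ • r := by
      rw [← h, smul_smul, inv_mul_cancel₀ hc0, one_smul]
    have hSE : S = c⁻¹ ^ 2 * E := by
      rw [hS, he, hEdef, Finset.mul_sum]
      exact Finset.sum_congr rfl (fun i _ => by simp [mul_pow])
    refine ⟨c⁻¹, ?_, he⟩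
    have hc' : c * μ₂ = μ₂ + 2 * μ₃ * (c⁻¹ ^ 2 * E - s) := by
      rw [← hSE, hc]; field_simp
    clear hc hS h he hEdef
    have hcc : c * c ≠ 0 := mul_ne_zero hc0 hc0
    rw [hp, hq]
    field_simp at hc' ⊢
    linear_combination (-1 : ℝ) * hc'
  · rintro ⟨γ, hγ, rfl⟩
    have hSE : (∑ i, (γ • r) i ^ 2) = γ ^ 2 * E := by
      rw [hEdef, Finset.mul_sum]
      exact Finset.sum_congr rfl (fun i _ => by simp [mul_pow])
    rw [hSE, smul_smul]
    have : (1 + 2 * μ₃ / μ₂ * (γ ^ 2 * E - s)) * γ = 1 := by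
      have h2 : (2 * μ₃ * E) ≠ 0 := by positivity
      rw [hp, hq] at hγ
      field_simp at hγ ⊢
      linarith [hγ]
    rw [this, one_smul]
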